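/- Let G be a countable discrete group. Suppose that for every finite family of bounded functions f_1,…,f_n: G → ℂ there exists a state τ^{f_1,…,f_n} on ℓ∞(G) such that each function x ↦ τ^{f_1,…,f_n}_y( f_i(xy) · conj(f_i(y)) ) is positive definite on G. Then there exists a single state τ on ℓ∞(G) such that for EVERY bounded function f: G → ℂ, the function x ↦ τ_y( f(xy) · conj(f(y)) ) is positive definite on G. -/
import Mathlib


open scoped ComplexOrder

/-- `f : G → ℂ` is bounded, i.e. `f ∈ ℓ∞(G)`. -/
def IsBddFun {G : Type*} (f : G → ℂ) : Prop := ∃ C : ℝ, ∀ x, ‖f x‖ ≤ C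

/-- A state on `ℓ∞(G)`: a positive unital linear functional, encoded as a functional on
all functions `G → ℂ` whose linearity, positivity and unitality are imposed on bounded
functions. -/
structure LinftyState (G : Type*) where
  toFun : (G → ℂ) → ℂ
  map_add : ∀ f g : G → ℂ, IsBddFun f → IsBddFun g → toFun (f + g) = toFun f + toFun g
  map_smul : ∀ (c : ℂ) (f : G → ℂ), IsBddFun f → toFun (c • f) = c * toFun f
  pos : ∀ f : G → ℂ, IsBddFun f → (∀ x, 0 ≤ f x) → 0 ≤ toFun f
  unital : toFun (fun _ => (1 : ℂ)) = 1

/-- A function `ψ : G → ℂ` is positive definite. -/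
def PosDefFun {G : Type*} [Group G] (ψ : G → ℂ) : Prop :=
  ∀ (n : ℕ) (x : Fin n → G) (c : Fin n → ℂ),
    0 ≤ ∑ i, ∑ j, (starRingEnd ℂ) (c i) * c j * ψ ((x i)⁻¹ * x j)

/-- A finitely supported probability measure on `G`. -/
structure FinProb (G : Type*) where
  w : G →₀ ℝ
  nonneg : ∀ y, 0 ≤ w y
  sum_one : w.sum (fun _ r => r) = 1

section Aux

open Filter Topology

lemma IsBddFun.add' {G : Type*} {f g : G → ℂ} (hf : IsBddFun f) (hg : IsBddFun g) :
    IsBddFun (f + g) := by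
  obtain ⟨C, hC⟩ := hf; obtain ⟨D, hD⟩ := hg
  exact ⟨C + D, fun x => (norm_add_le _ _).trans (add_le_add (hC x) (hD x))⟩

lemma IsBddFun.smul' {G : Type*} (c : ℂ) {f : G → ℂ} (hf : IsBddFun f) :
    IsBddFun (c • f) := by
  obtain ⟨C, hC⟩ := hf
  refine ⟨‖c‖ * C, fun x => ?_⟩
  simp only [Pi.smul_apply, smul_eq_mul, norm_mul]
  exact mul_le_mul_of_nonneg_left (hC x) (norm_nonneg c)

lemma state_const {G : Type*} (τ : LinftyState G) (c : ℂ) :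
    τ.toFun (fun _ => c) = c := by
  have h := τ.map_smul c (fun _ => 1) ⟨1, fun _ => by simp⟩
  have : (c • fun _ : G => (1:ℂ)) = (fun _ : G => c) := by
    funext x; simp
  rw [this, τ.unital, mul_one] at h
  exact h

lemma state_nonneg_real {G : Type*} (τ : LinftyState G) (u : G → ℝ) (C : ℝ)
    (hu0 : ∀ x, 0 ≤ u x) (huC : ∀ x, u x ≤ C) :
    ∃ r : ℝ, 0 ≤ r ∧ r ≤ C ∧ τ.toFun (fun x => (u x : ℂ)) = r := by
  have hb1 : IsBddFun (fun x => (u x : ℂ)) :=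
    ⟨C, fun x => by simpa [Complex.norm_real, abs_of_nonneg (hu0 x)] using huC x⟩
  have hb2 : IsBddFun (fun x => ((C - u x : ℝ) : ℂ)) := by
    refine ⟨C, fun x => ?_⟩
    have h0 : 0 ≤ C - u x := by linarith [huC x]
    have h1 : C - u x ≤ C := by linarith [hu0 x]
    rw [Complex.norm_real, Real.norm_eq_abs, abs_of_nonneg h0]
    exact h1
  have hp1 : 0 ≤ τ.toFun (fun x => (u x : ℂ)) :=
    τ.pos _ hb1 (fun x => Complex.zero_le_real.mpr (hu0 x))
  have hp2 : 0 ≤ τ.toFun (fun x => ((C - u x : ℝ) : ℂ)) :=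
    τ.pos _ hb2 (fun x => Complex.zero_le_real.mpr (by linarith [huC x]))
  have hadd := τ.map_add _ _ hb1 hb2
  have heq : ((fun x => (u x : ℂ)) + fun x => ((C - u x : ℝ) : ℂ)) = fun _ : G => (C : ℂ) := by
    funext x; push_cast [Pi.add_apply]; ring
  rw [heq, state_const] at hadd
  obtain ⟨hr1, hi1⟩ := Complex.nonneg_iff.mp hp1
  obtain ⟨hr2, _⟩ := Complex.nonneg_iff.mp hp2
  refine ⟨(τ.toFun (fun x => (u x : ℂ))).re, hr1, ?_, ?_⟩
  · have := congrArg Complex.re hadd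
    simp only [Complex.add_re, Complex.ofReal_re] at this
    linarith
  · exact (Complex.ext (by simp) (by simp [← hi1])).symm

lemma state_bound {G : Type*} [Group G] (τ : LinftyState G) (g : G → ℂ) (C : ℝ)
    (hC : ∀ x, ‖g x‖ ≤ C) : ‖τ.toFun g‖ ≤ 4 * C := by
  have hC0 : 0 ≤ C := le_trans (norm_nonneg _) (hC 1)
  set u1 : G → ℝ := fun x => max (g x).re 0 with hu1
  set u2 : G → ℝ := fun x => max (-(g x).re) 0 with hu2
  set u3 : G → ℝ := fun x => max (g x).im 0 with hu3
  set u4 : G → ℝ := fun x => max (-(g x).im) 0 with hu4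
  have hre : ∀ x, |(g x).re| ≤ C := fun x => le_trans (Complex.abs_re_le_norm _) (hC x)
  have him : ∀ x, |(g x).im| ≤ C := fun x => le_trans (Complex.abs_im_le_norm _) (hC x)
  have b1 : ∀ x, u1 x ≤ C := fun x => max_le (le_trans (le_abs_self _) (hre x)) hC0
  have b2 : ∀ x, u2 x ≤ C := fun x => max_le (le_trans (neg_le_abs _) (hre x)) hC0
  have b3 : ∀ x, u3 x ≤ C := fun x => max_le (le_trans (le_abs_self _) (him x)) hC0
  have b4 : ∀ x, u4 x ≤ C := fun x => max_le (le_trans (neg_le_abs _) (him x)) hC0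
  obtain ⟨r1, hr10, hr1C, hr1⟩ := state_nonneg_real τ u1 C (fun x => le_max_right _ _) b1
  obtain ⟨r2, hr20, hr2C, hr2⟩ := state_nonneg_real τ u2 C (fun x => le_max_right _ _) b2
  obtain ⟨r3, hr30, hr3C, hr3⟩ := state_nonneg_real τ u3 C (fun x => le_max_right _ _) b3
  obtain ⟨r4, hr40, hr4C, hr4⟩ := state_nonneg_real τ u4 C (fun x => le_max_right _ _) b4
  -- g = f1 + (-1) • f2 + I • f3 + (-I) • f4
  have hbk : ∀ (u : G → ℝ), (∀ x, 0 ≤ u x) → (∀ x, u x ≤ C) → IsBddFun (fun x => (u x : ℂ)) :=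
    fun u h0 hc => ⟨C, fun x => by simpa [Complex.norm_real, abs_of_nonneg (h0 x)] using hc x⟩
  have hb1 := hbk u1 (fun x => le_max_right _ _) b1
  have hb2 := hbk u2 (fun x => le_max_right _ _) b2
  have hb3 := hbk u3 (fun x => le_max_right _ _) b3
  have hb4 := hbk u4 (fun x => le_max_right _ _) b4
  have hdecomp : g = (fun x => (u1 x : ℂ)) + (-1 : ℂ) • (fun x => (u2 x : ℂ))
      + Complex.I • (fun x => (u3 x : ℂ)) + (-Complex.I) • (fun x => (u4 x : ℂ)) := by
    funext x
    have h1 : u1 x - u2 x = (g x).re := by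
      simp only [hu1, hu2]
      rcases le_total 0 (g x).re with h | h
      · rw [max_eq_left h, max_eq_right (by linarith)]; ring
      · rw [max_eq_right h, max_eq_left (by linarith)]; ring
    have h2 : u3 x - u4 x = (g x).im := by
      simp only [hu3, hu4]
      rcases le_total 0 (g x).im with h | h
      · rw [max_eq_left h, max_eq_right (by linarith)]; ring
      · rw [max_eq_right h, max_eq_left (by linarith)]; ring
    simp only [Pi.add_apply, Pi.smul_apply, smul_eq_mul]
    rw [← Complex.re_add_im (g x), ← h1, ← h2]
    push_cast
    ring
  have e2 := τ.map_smul (-1 : ℂ) _ hb2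
  have e3 := τ.map_smul Complex.I _ hb3
  have e4 := τ.map_smul (-Complex.I) _ hb4
  have a1 := τ.map_add _ _ hb1 (hb2.smul' (-1 : ℂ))
  have a2 := τ.map_add _ _ (hb1.add' (hb2.smul' (-1:ℂ))) (hb3.smul' Complex.I)
  have a3 := τ.map_add _ _ ((hb1.add' (hb2.smul' (-1:ℂ))).add' (hb3.smul' Complex.I))
      (hb4.smul' (-Complex.I))
  rw [hdecomp, a3, a2, a1, e2, e3, e4, hr1, hr2, hr3, hr4]
  have hnorm : ∀ r : ℝ, 0 ≤ r → ‖(r:ℂ)‖ = r := fun r hr => by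
    rw [Complex.norm_real, Real.norm_eq_abs, abs_of_nonneg hr]
  have n1 : ‖(r1:ℂ)‖ = r1 := hnorm r1 hr10
  have n2 : ‖(-1:ℂ) * (r2:ℂ)‖ = r2 := by
    rw [norm_mul, norm_neg, norm_one, one_mul]; exact hnorm r2 hr20
  have n3 : ‖Complex.I * (r3:ℂ)‖ = r3 := by
    rw [norm_mul, Complex.norm_I, one_mul]; exact hnorm r3 hr30
  have n4 : ‖-Complex.I * (r4:ℂ)‖ = r4 := by
    rw [norm_mul, norm_neg, Complex.norm_I, one_mul]; exact hnorm r4 hr40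
  have t1 := norm_add_le ((r1:ℂ) + -1 * (r2:ℂ) + Complex.I * (r3:ℂ)) (-Complex.I * (r4:ℂ))
  have t2 := norm_add_le ((r1:ℂ) + -1 * (r2:ℂ)) (Complex.I * (r3:ℂ))
  have t3 := norm_add_le (r1:ℂ) ((-1:ℂ) * (r2:ℂ))
  linarith

lemma isClosed_nonneg' : IsClosed {z : ℂ | 0 ≤ z} := by
  have : {z : ℂ | 0 ≤ z} = Complex.re ⁻¹' Set.Ici 0 ∩ Complex.im ⁻¹' {0} := by
    ext z
    simp [Complex.nonneg_iff, eq_comm]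
  rw [this]
  exact (isClosed_Ici.preimage Complex.continuous_re).inter
    (isClosed_singleton.preimage Complex.continuous_im)

end Aux

/-- Remark 3.5 of the paper. If for every finite family of bounded
functions `f₁,…,fₙ : G → ℂ` there is a state `τ^{f₁,…,fₙ}` on `ℓ∞(G)` making each
`x ↦ τ^{f₁,…,fₙ}_y(fᵢ(xy) conj(fᵢ(y)))` positive definite, then there is a single state `τ`
on `ℓ∞(G)` such that for every bounded `f : G → ℂ` the function
`x ↦ τ_y(f(xy) conj(f(y)))` is positive definite. -/
theorem stmt_9 (G : Type*) [Group G] [Countable G]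
    (h : ∀ (n : ℕ) (f : Fin n → G → ℂ), (∀ i, IsBddFun (f i)) →
      ∃ τ : LinftyState G, ∀ i : Fin n,
        PosDefFun (fun x => τ.toFun (fun y => f i (x * y) * (starRingEnd ℂ) (f i y)))) :
    ∃ τ : LinftyState G, ∀ f : G → ℂ, IsBddFun f →
      PosDefFun (fun x => τ.toFun (fun y => f (x * y) * (starRingEnd ℂ) (f y))) := by
  classical
  open Filter Topology in
  -- Step 1: for each finite set of bounded functions, choose a state.
  have hσ : ∀ S : Finset {f : G → ℂ // IsBddFun f}, ∃ τ : LinftyState G, ∀ p ∈ S,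
      PosDefFun (fun x => τ.toFun (fun y => p.1 (x * y) * (starRingEnd ℂ) (p.1 y))) := by
    intro S
    obtain ⟨τ, hτ⟩ := h S.card (fun i => (S.equivFin.symm i).1.1)
      (fun i => (S.equivFin.symm i).1.2)
    refine ⟨τ, fun p hp => ?_⟩
    have := hτ (S.equivFin ⟨p, hp⟩)
    simpa using this
  choose σ hσ using hσ
  -- Step 2: ultrafilter on finite sets refining the `atTop` filter.
  let U : Ultrafilter (Finset {f : G → ℂ // IsBddFun f}) := Ultrafilter.of atTop
  have hUat : (U : Filter (Finset {f : G → ℂ // IsBddFun f})) ≤ atTop := Ultrafilter.of_le _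
  have hmem : ∀ p : {f : G → ℂ // IsBddFun f}, ∀ᶠ S in (U : Filter (Finset {f : G → ℂ // IsBddFun f})), p ∈ S := by
    intro p
    have : ∀ᶠ S in (atTop : Filter (Finset {f : G → ℂ // IsBddFun f})), ({p} : Finset _) ≤ S :=
      eventually_ge_atTop _
    exact (this.filter_mono hUat).mono (fun S hS => Finset.singleton_subset_iff.mp hS)
  -- Step 3: ultrafilter limits exist for bounded functions.
  have hex : ∀ g : G → ℂ, IsBddFun g →
      ∃ z : ℂ, Tendsto (fun S => (σ S).toFun g) (U : Filter (Finset {f : G → ℂ // IsBddFun f})) (𝓝 z) := by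
    intro g hg
    obtain ⟨C, hC⟩ := hg
    have hball : ∀ S, (σ S).toFun g ∈ Metric.closedBall (0:ℂ) (4 * C) := by
      intro S
      simpa [Metric.mem_closedBall, dist_eq_norm] using state_bound (σ S) g C hC
    obtain ⟨z, _, hz⟩ := (isCompact_closedBall (0:ℂ) (4*C)).ultrafilter_le_nhds
      (U.map (fun S => (σ S).toFun g))
      (by
        rw [Ultrafilter.coe_map, le_principal_iff, mem_map]
        exact Filter.univ_mem' hball)
    exact ⟨z, hz⟩
  -- Step 4: define the limiting functional.
  let L : (G → ℂ) → ℂ := fun g => if hg : IsBddFun g then Classical.choose (hex g hg) else 0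
  have hL : ∀ g (hg : IsBddFun g), Tendsto (fun S => (σ S).toFun g) (U : Filter (Finset {f : G → ℂ // IsBddFun f})) (𝓝 (L g)) := by
    intro g hg
    simpa only [L, dif_pos hg] using Classical.choose_spec (hex g hg)
  -- Step 5: L is a state.
  refine ⟨⟨L, ?_, ?_, ?_, ?_⟩, ?_⟩
  · -- additivity
    intro f g hf hg
    refine tendsto_nhds_unique (hL (f + g) (hf.add' hg)) ?_
    have : ∀ S, (σ S).toFun (f + g) = (σ S).toFun f + (σ S).toFun g :=
      fun S => (σ S).map_add f g hf hg
    simp only [this]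
    exact (hL f hf).add (hL g hg)
  · -- homogeneity
    intro c f hf
    refine tendsto_nhds_unique (hL (c • f) (hf.smul' c)) ?_
    have : ∀ S, (σ S).toFun (c • f) = c * (σ S).toFun f := fun S => (σ S).map_smul c f hf
    simp only [this]
    exact (hL f hf).const_mul c
  · -- positivity
    intro f hf hf0
    exact isClosed_nonneg'.mem_of_tendsto (hL f hf)
      (Filter.Eventually.of_forall (fun S => (σ S).pos f hf hf0))
  · -- unitality
    refine tendsto_nhds_unique (hL (fun _ => 1) ⟨1, fun _ => by simp⟩) ?_
    have : ∀ S, (σ S).toFun (fun _ => (1:ℂ)) = 1 := fun S => (σ S).unital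
    simp only [this]
    exact tendsto_const_nhds
  -- Step 6: positive definiteness.
  intro f hf n x c
  have hCf := hf
  obtain ⟨C, hC⟩ := hCf
  have hC0 : 0 ≤ C := le_trans (norm_nonneg _) (hC 1)
  have hbdd : ∀ a : G, IsBddFun (fun y => f (a * y) * (starRingEnd ℂ) (f y)) := by
    intro a
    refine ⟨C * C, fun y => ?_⟩
    rw [norm_mul]
    exact mul_le_mul (hC _) (by simpa using hC y) (norm_nonneg _) hC0
  have htend : Tendsto
      (fun S => ∑ i, ∑ j, (starRingEnd ℂ) (c i) * c j *
        (σ S).toFun (fun y => f ((x i)⁻¹ * x j * y) * (starRingEnd ℂ) (f y)))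
      (U : Filter (Finset {f : G → ℂ // IsBddFun f}))
      (𝓝 (∑ i, ∑ j, (starRingEnd ℂ) (c i) * c j *
        L (fun y => f ((x i)⁻¹ * x j * y) * (starRingEnd ℂ) (f y)))) := by
    refine tendsto_finset_sum _ (fun i _ => tendsto_finset_sum _ (fun j _ => ?_))
    exact ((hL _ (hbdd ((x i)⁻¹ * x j))).const_mul _)
  refine isClosed_nonneg'.mem_of_tendsto htend ?_
  filter_upwards [hmem ⟨f, hf⟩] with S hS
  exact hσ S ⟨f, hf⟩ hS n x c
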